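/- For every finite family D of complete patterns over U, there exists a family C of CS-patterns over U that parity-represents D; in particular, the CS-patterns form a spanning set of the rows of the consistency matrix restricted to complete patterns over GF(2). -/

import Mathlib

open Finset
open scoped Classical
open scoped symmDiff

namespace PatternST

variable {α : Type*} [DecidableEq α]

/-- `p` is a pattern over ground set `U` with zero element `z`:
a family of subsets of `U ∪ {z}` with exactly one member containing `z`. -/
def IsPattern (z : α) (U : Finset α) (p : Finset (Finset α)) : Prop :=
  (∀ S ∈ p, S ⊆ insert z U) ∧ ∃! S, S ∈ p ∧ z ∈ S

/-- Two sets are linked if one belongs to `p`, the other to `q`, and they intersect. -/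
def linkRel (p q : Finset (Finset α)) (S T : Finset α) : Prop :=
  ((S ∈ p ∧ T ∈ q) ∨ (S ∈ q ∧ T ∈ p)) ∧ (S ∩ T).Nonempty

/-- Reflexive-transitive (and, by symmetry of `linkRel`, symmetric) closure. -/
def conn (p q : Finset (Finset α)) : Finset α → Finset α → Prop :=
  Relation.ReflTransGen (linkRel p q)

/-- The join `p ⋈ q`: unions of the equivalence classes of `conn` on `p ∪ q`. -/
noncomputable def pjoin (p q : Finset (Finset α)) : Finset (Finset α) :=
  (p ∪ q).image fun S => ((p ∪ q).filter fun T => conn p q S T).sup id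

/-- `p` and `q` are consistent if `p ⋈ q` consists of a single set. -/
def consistent (p q : Finset (Finset α)) : Prop := (pjoin p q).card = 1

/-- The labels (elements of `U`, i.e. everything except `z`) occurring in `p`. -/
def lbs (z : α) (p : Finset (Finset α)) : Finset α := (p.sup id).erase z

/-- The labels appearing as singletons in `p`. -/
def sing (z : α) (p : Finset (Finset α)) : Finset α :=
  (lbs z p).filter fun u => ({u} : Finset α) ∈ p

/-- A pattern is complete if every occurring label occurs as a singleton. -/
def Complete (z : α) (p : Finset (Finset α)) : Prop := lbs z p = sing z p

/-- A CS-pattern: zero-set `{z} ∪ X` together with the singletons of `Y`. -/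
def csPattern (z : α) (X Y : Finset α) : Finset (Finset α) :=
  insert (insert z X) (Y.image fun u => ({u} : Finset α))

/-- `C` parity-represents `D`. -/
def ParityRep (z : α) (U : Finset α) (C D : Finset (Finset (Finset α))) : Prop :=
  ∀ q : Finset (Finset α), IsPattern z U q → Complete z q →
    (C.filter fun p => consistent p q).card % 2 =
    (D.filter fun p => consistent p q).card % 2

/-! ### Abstract hypergraph-closure machinery -/

/-- Two blocks of a family `M` intersect. -/
def irel (M : Finset (Finset α)) (T T' : Finset α) : Prop :=
  T ∈ M ∧ T' ∈ M ∧ (T ∩ T').Nonempty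

/-- Connectivity in the intersection graph of blocks of `M`. -/
def iconn (M : Finset (Finset α)) : Finset α → Finset α → Prop :=
  Relation.ReflTransGen (irel M)

lemma irel_symm (M : Finset (Finset α)) : Symmetric (irel M) := by
  rintro T T' ⟨h1, h2, h3⟩
  exact ⟨h2, h1, by rwa [inter_comm]⟩

lemma iconn_symm {M : Finset (Finset α)} {T T' : Finset α} (h : iconn M T T') :
    iconn M T' T := by
  haveI : Std.Symm (irel M) := ⟨fun _ _ h => irel_symm M h⟩
  exact symm_of (Relation.ReflTransGen (irel M)) h

lemma iconn_mem_right {M : Finset (Finset α)} {T T' : Finset α} (h : iconn M T T')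
    (hT : T ∈ M) : T' ∈ M := by
  induction h with
  | refl => exact hT
  | tail _ h2 _ => exact h2.2.1

lemma iconn_mono {M M' : Finset (Finset α)} (h : M ⊆ M') {T T' : Finset α}
    (hc : iconn M T T') : iconn M' T T' :=
  Relation.ReflTransGen.mono (fun _ _ hr => ⟨h hr.1, h hr.2.1, hr.2.2⟩) _ _ hc

/-- Blocks of `M` connected to the base set `W`. -/
noncomputable def tch (M : Finset (Finset α)) (W : Finset α) : Finset (Finset α) :=
  M.filter fun T => ∃ T₀ ∈ M, (T₀ ∩ W).Nonempty ∧ iconn M T₀ T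

/-- Closure of `W` under the blocks of `M`. -/
noncomputable def cl (M : Finset (Finset α)) (W : Finset α) : Finset α :=
  W ∪ (tch M W).sup id

lemma mem_tch {M : Finset (Finset α)} {W T : Finset α} :
    T ∈ tch M W ↔ T ∈ M ∧ ∃ T₀ ∈ M, (T₀ ∩ W).Nonempty ∧ iconn M T₀ T := mem_filter

lemma subset_cl (M : Finset (Finset α)) (W : Finset α) : W ⊆ cl M W := subset_union_left

lemma tch_subset (M : Finset (Finset α)) (W : Finset α) : tch M W ⊆ M := filter_subset _ _

lemma subset_cl_of_tch {M : Finset (Finset α)} {W T : Finset α} (h : T ∈ tch M W) :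
    T ⊆ cl M W :=
  le_trans (Finset.le_sup (f := id) h) subset_union_right

lemma cl_subset {M : Finset (Finset α)} {W G : Finset α} (hW : W ⊆ G)
    (hM : ∀ T ∈ M, T ⊆ G) : cl M W ⊆ G :=
  union_subset hW (Finset.sup_le fun T hT => hM T (tch_subset _ _ hT))

lemma tch_union (M : Finset (Finset α)) (W W' : Finset α) :
    tch M (W ∪ W') = tch M W ∪ tch M W' := by
  ext T
  simp only [tch, mem_filter, mem_union]
  constructor
  · rintro ⟨hT, T₀, hT₀, ⟨x, hx⟩, hc⟩
    rw [mem_inter, mem_union] at hx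
    rcases hx.2 with h | h
    · exact Or.inl ⟨hT, T₀, hT₀, ⟨x, mem_inter.2 ⟨hx.1, h⟩⟩, hc⟩
    · exact Or.inr ⟨hT, T₀, hT₀, ⟨x, mem_inter.2 ⟨hx.1, h⟩⟩, hc⟩
  · rintro (⟨hT, T₀, hT₀, ⟨x, hx⟩, hc⟩ | ⟨hT, T₀, hT₀, ⟨x, hx⟩, hc⟩) <;>
      rw [mem_inter] at hx
    · exact ⟨hT, T₀, hT₀, ⟨x, mem_inter.2 ⟨hx.1, mem_union_left _ hx.2⟩⟩, hc⟩
    · exact ⟨hT, T₀, hT₀, ⟨x, mem_inter.2 ⟨hx.1, mem_union_right _ hx.2⟩⟩, hc⟩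

lemma cl_union (M : Finset (Finset α)) (W W' : Finset α) :
    cl M (W ∪ W') = cl M W ∪ cl M W' := by
  unfold cl
  rw [tch_union, sup_union]
  ext x
  simp only [mem_union, sup_eq_union]
  tauto

lemma mem_tch_of_inter {M : Finset (Finset α)} {W T : Finset α} (hT : T ∈ M)
    (h : (T ∩ cl M W).Nonempty) : T ∈ tch M W := by
  obtain ⟨x, hx⟩ := h
  rw [mem_inter] at hx
  rcases mem_union.1 hx.2 with hW | hS
  · exact mem_tch.2 ⟨hT, T, hT, ⟨x, mem_inter.2 ⟨hx.1, hW⟩⟩, .refl⟩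
  · obtain ⟨T₁, hT₁, hxT₁⟩ := Finset.mem_sup.1 hS
    obtain ⟨hT₁M, T₀, hT₀, hne, hc⟩ := mem_tch.1 hT₁
    exact mem_tch.2 ⟨hT, T₀, hT₀, hne,
      hc.tail ⟨hT₁M, hT, ⟨x, mem_inter.2 ⟨hxT₁, hx.1⟩⟩⟩⟩

lemma tch_of_chain {M : Finset (Finset α)} {W T₀ T : Finset α} (hT₀ : T₀ ∈ M)
    (h : (T₀ ∩ cl M W).Nonempty) (hc : iconn M T₀ T) : T ∈ tch M W := by
  have h0 := mem_tch_of_inter hT₀ h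
  obtain ⟨_, T₁, hT₁, hne, hc1⟩ := mem_tch.1 h0
  exact mem_tch.2 ⟨iconn_mem_right hc hT₀, T₁, hT₁, hne, hc1.trans hc⟩

lemma cl_subset_cl {M : Finset (Finset α)} {W W' : Finset α} (h : W' ⊆ cl M W) :
    cl M W' ⊆ cl M W := by
  refine union_subset h (Finset.sup_le fun T hT => ?_)
  obtain ⟨hTM, T₀, hT₀, ⟨x, hx⟩, hc⟩ := mem_tch.1 hT
  rw [mem_inter] at hx
  have hx2 : (T₀ ∩ cl M W).Nonempty := ⟨x, mem_inter.2 ⟨hx.1, h hx.2⟩⟩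
  exact subset_cl_of_tch (tch_of_chain hT₀ hx2 hc)

lemma cl_absorb {M : Finset (Finset α)} {W W' : Finset α} (h : W' ⊆ cl M W) :
    cl M (W ∪ W') = cl M W := by
  rw [cl_union]
  exact union_eq_left.2 (cl_subset_cl h)

lemma tch_mono_M {M M' : Finset (Finset α)} (h : M ⊆ M') (W : Finset α) :
    tch M W ⊆ tch M' W := by
  intro T hT
  obtain ⟨hTM, T₀, hT₀, hne, hc⟩ := mem_tch.1 hT
  exact mem_tch.2 ⟨h hTM, T₀, h hT₀, hne, iconn_mono h hc⟩

lemma cl_mono_M {M M' : Finset (Finset α)} (h : M ⊆ M') (W : Finset α) :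
    cl M W ⊆ cl M' W :=
  union_subset_union (subset_refl W) (Finset.sup_mono (tch_mono_M h W))

lemma cl_insert_disj {M : Finset (Finset α)} {W S : Finset α}
    (h : S ∩ cl M W = ∅) : cl (insert S M) W = cl M W := by
  refine subset_antisymm ?_ (cl_mono_M (subset_insert _ _) W)
  have key : ∀ T₀ T : Finset α, iconn (insert S M) T₀ T → T₀ ∈ M → (T₀ ∩ W).Nonempty →
      T ∈ tch M W := by
    intro T₀ T hc
    induction hc with
    | refl => exact fun h1 h2 => mem_tch.2 ⟨h1, T₀, h1, h2, .refl⟩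
    | tail hbc hrel ih =>
        intro h1 h2
        have hb := ih h1 h2
        obtain ⟨hbM', hcM', hne⟩ := hrel
        obtain ⟨x, hx⟩ := hne
        rw [mem_inter] at hx
        have hxcl : x ∈ cl M W := subset_cl_of_tch hb hx.1
        rcases mem_insert.1 hcM' with hEq | hm
        · exfalso
          have hmem : x ∈ S ∩ cl M W := mem_inter.2 ⟨hEq ▸ hx.2, hxcl⟩
          rw [h] at hmem
          exact notMem_empty x hmem
        · exact mem_tch_of_inter hm ⟨x, mem_inter.2 ⟨hx.2, hxcl⟩⟩
  refine union_subset (subset_cl M W) (Finset.sup_le fun T hT => ?_)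
  obtain ⟨hTM, T₀, hT₀, hne, hc⟩ := mem_tch.1 hT
  have hT₀M : T₀ ∈ M := by
    rcases mem_insert.1 hT₀ with hEq | hm
    · exfalso
      obtain ⟨x, hx⟩ := hne
      rw [mem_inter] at hx
      have hmem : x ∈ S ∩ cl M W := mem_inter.2 ⟨hEq ▸ hx.1, subset_cl M W hx.2⟩
      rw [h] at hmem
      exact notMem_empty x hmem
    · exact hm
  exact subset_cl_of_tch (key T₀ T hc hT₀M hne)

lemma cl_insert_meet {M : Finset (Finset α)} {W S : Finset α}
    (h : (S ∩ cl M W).Nonempty) : cl (insert S M) W = cl M (W ∪ S) := by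
  have hSM' : S ∈ tch (insert S M) W := by
    obtain ⟨x, hx⟩ := h
    rw [mem_inter] at hx
    rcases mem_union.1 hx.2 with hW | hsup
    · exact mem_tch.2 ⟨mem_insert_self _ _, S, mem_insert_self _ _,
        ⟨x, mem_inter.2 ⟨hx.1, hW⟩⟩, .refl⟩
    · obtain ⟨T₁, hT₁, hxT₁⟩ := Finset.mem_sup.1 hsup
      obtain ⟨hT₁M, T₀, hT₀, hne, hc⟩ := mem_tch.1 hT₁
      refine mem_tch.2 ⟨mem_insert_self _ _, T₀, mem_insert_of_mem hT₀, hne, ?_⟩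
      exact (iconn_mono (subset_insert _ _) hc).tail
        ⟨mem_insert_of_mem hT₁M, mem_insert_self _ _, ⟨x, mem_inter.2 ⟨hxT₁, hx.1⟩⟩⟩
  have hS_sub : S ⊆ cl (insert S M) W := subset_cl_of_tch hSM'
  apply subset_antisymm
  · have aux : ∀ T₀ T : Finset α, iconn (insert S M) T₀ T → T₀ ∈ insert S M →
        (T₀ ∩ W).Nonempty → T ⊆ cl M (W ∪ S) := by
      intro T₀ T hc
      induction hc with
      | refl =>
          intro h1 h2
          rcases mem_insert.1 h1 with hEq | hm
          · rw [hEq]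
            exact subset_union_right.trans (subset_cl M (W ∪ S))
          · refine subset_cl_of_tch (mem_tch_of_inter hm ?_)
            obtain ⟨x, hx⟩ := h2
            rw [mem_inter] at hx
            exact ⟨x, mem_inter.2 ⟨hx.1, subset_cl _ _ (mem_union_left _ hx.2)⟩⟩
      | tail hbc hrel ih =>
          intro h1 h2
          have hb := ih h1 h2
          obtain ⟨hbM', hcM', hne⟩ := hrel
          rcases mem_insert.1 hcM' with hEq | hm
          · rw [hEq]
            exact subset_union_right.trans (subset_cl M (W ∪ S))
          · obtain ⟨x, hx⟩ := hne
            rw [mem_inter] at hx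
            exact subset_cl_of_tch
              (mem_tch_of_inter hm ⟨x, mem_inter.2 ⟨hx.2, hb hx.1⟩⟩)
    refine union_subset (le_trans subset_union_left (subset_cl _ _))
      (Finset.sup_le fun T hT => ?_)
    obtain ⟨hTM, T₀, hT₀, hne, hc⟩ := mem_tch.1 hT
    exact aux T₀ T hc hT₀ hne
  · refine le_trans (cl_mono_M (subset_insert _ _) (W ∪ S)) (cl_subset_cl ?_)
    exact union_subset (subset_cl _ _) hS_sub

lemma cl_union_sup (M : Finset (Finset α)) (W V : Finset α) :
    cl M (W ∪ V) = cl M W ∪ V.sup (fun u => cl M {u}) := by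
  induction V using Finset.induction_on with
  | empty => simp
  | @insert a V ha ih =>
      have h1 : W ∪ insert a V = (W ∪ V) ∪ {a} := by
        ext x; simp only [mem_union, mem_insert, mem_singleton]; tauto
      rw [h1, cl_union, ih, sup_insert]
      ext x
      simp only [mem_union, sup_eq_union]
      tauto

lemma cl_singleton_comm {M : Finset (Finset α)} {u v : α} (h : v ∈ cl M {u})
    (hne : v ≠ u) : u ∈ cl M {v} := by
  rcases mem_union.1 h with h1 | h2
  · exact absurd (mem_singleton.1 h1) hne
  · obtain ⟨T, hT, hvT⟩ := Finset.mem_sup.1 h2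
    obtain ⟨hTM, T₀, hT₀, hne0, hc⟩ := mem_tch.1 hT
    have hT₀v : T₀ ∈ tch M {v} := mem_tch.2 ⟨hT₀, T, hTM,
      ⟨v, mem_inter.2 ⟨hvT, mem_singleton_self v⟩⟩, iconn_symm hc⟩
    have hu : u ∈ T₀ := by
      obtain ⟨x, hx⟩ := hne0
      rw [mem_inter, mem_singleton] at hx
      obtain ⟨h1, rfl⟩ := hx
      exact h1
    exact subset_cl_of_tch hT₀v hu

/-! ### The counting lemmas -/

lemma odd_hit (D : α → Finset α) :
    ∀ S : Finset α, (∀ u ∈ S, u ∈ D u) →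
      (∀ u ∈ S, ∀ v ∈ S, v ∈ D u → u = v ∨ D u = D v) →
      (∑ V ∈ S.powerset, (if ∀ v ∈ S, ∃ u ∈ V, v ∈ D u then (1 : ZMod 2) else 0)) = 1 := by
  intro S
  induction S using Finset.strongInduction with
  | _ S ih =>
  intro h1 h3
  rcases S.eq_empty_or_nonempty with rfl | ⟨v₀, hv₀⟩
  · simp
  have hKS : S.filter (fun u => u ∈ D v₀) ⊆ S := filter_subset _ _
  set K := S.filter (fun u => u ∈ D v₀) with hK
  have hv₀K : v₀ ∈ K := mem_filter.2 ⟨hv₀, h1 v₀ hv₀⟩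
  have hssub : S \ K ⊂ S := sdiff_ssubset hKS ⟨v₀, hv₀K⟩
  have hDK : ∀ u ∈ K, D u = D v₀ := by
    intro u hu
    obtain ⟨huS, huD⟩ := mem_filter.1 hu
    rcases h3 v₀ hv₀ u huS huD with rfl | e
    · rfl
    · exact e.symm
  have hiff : ∀ W ∈ K.powerset, ∀ V' ∈ (S \ K).powerset,
      ((∀ v ∈ S, ∃ u ∈ W ∪ V', v ∈ D u) ↔
        (W.Nonempty ∧ ∀ v ∈ S \ K, ∃ u ∈ V', v ∈ D u)) := by
    intro W hW V' hV'
    rw [mem_powerset] at hW hV'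
    constructor
    · intro hhit
      constructor
      · obtain ⟨u, hu, hv₀D⟩ := hhit v₀ hv₀
        rcases mem_union.1 hu with h | h
        · exact ⟨u, h⟩
        · exfalso
          have huS : u ∈ S := (mem_sdiff.1 (hV' h)).1
          have huK : u ∉ K := (mem_sdiff.1 (hV' h)).2
          rcases h3 u huS v₀ hv₀ hv₀D with rfl | e
          · exact huK hv₀K
          · exact huK (mem_filter.2 ⟨huS, e ▸ h1 u huS⟩)
      · intro v hv
        have hvS : v ∈ S := (mem_sdiff.1 hv).1
        obtain ⟨u, hu, hvD⟩ := hhit v hvS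
        rcases mem_union.1 hu with h | h
        · exfalso
          have hDu : D u = D v₀ := hDK u (hW h)
          exact (mem_sdiff.1 hv).2 (mem_filter.2 ⟨hvS, hDu ▸ hvD⟩)
        · exact ⟨u, h, hvD⟩
    · rintro ⟨⟨w, hw⟩, hhit'⟩
      intro v hv
      by_cases hvK : v ∈ K
      · refine ⟨w, mem_union_left _ hw, ?_⟩
        rw [hDK w (hW hw)]
        exact (mem_filter.1 hvK).2
      · obtain ⟨u, hu, hD⟩ := hhit' v (mem_sdiff.2 ⟨hv, hvK⟩)
        exact ⟨u, mem_union_right _ hu, hD⟩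
  have hbij : (∑ V ∈ S.powerset, (if ∀ v ∈ S, ∃ u ∈ V, v ∈ D u then (1 : ZMod 2) else 0))
      = ∑ p ∈ K.powerset ×ˢ (S \ K).powerset,
          (if ∀ v ∈ S, ∃ u ∈ p.1 ∪ p.2, v ∈ D u then (1 : ZMod 2) else 0) := by
    apply Finset.sum_nbij' (i := fun V => (V ∩ K, V \ K)) (j := fun p => p.1 ∪ p.2)
    · intro V hV
      rw [mem_powerset] at hV
      rw [mem_product]
      exact ⟨mem_powerset.2 inter_subset_right,
        mem_powerset.2 (sdiff_subset_sdiff hV (subset_refl K))⟩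
    · intro p hp
      rw [mem_product, mem_powerset, mem_powerset] at hp
      exact mem_powerset.2 (union_subset (hp.1.trans hKS) (hp.2.trans sdiff_subset))
    · intro V _
      ext x
      simp only [mem_union, mem_inter, mem_sdiff]
      tauto
    · intro p hp
      rw [mem_product, mem_powerset, mem_powerset] at hp
      obtain ⟨a, b⟩ := p
      obtain ⟨h1p, h2p⟩ := hp
      have hd : ∀ x ∈ b, x ∉ K := fun x hx => (mem_sdiff.1 (h2p hx)).2
      have e1 : (a ∪ b) ∩ K = a := by
        ext x
        simp only [mem_inter, mem_union]
        constructor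
        · rintro ⟨h | h, hK2⟩
          · exact h
          · exact absurd hK2 (hd x h)
        · intro h
          exact ⟨Or.inl h, h1p h⟩
      have e2 : (a ∪ b) \ K = b := by
        ext x
        simp only [mem_sdiff, mem_union]
        constructor
        · rintro ⟨h | h, hK2⟩
          · exact absurd (h1p h) hK2
          · exact h
        · intro h
          exact ⟨Or.inr h, hd x h⟩
      simp only [Prod.mk.injEq]
      exact ⟨e1, e2⟩
    · intro V hV
      have hsplit : (V ∩ K) ∪ (V \ K) = V := by
        ext x
        simp only [mem_union, mem_inter, mem_sdiff]
        tauto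
      rw [hsplit]
  rw [hbij, Finset.sum_product]
  have hterm : ∀ W ∈ K.powerset, ∀ V' ∈ (S \ K).powerset,
      (if ∀ v ∈ S, ∃ u ∈ W ∪ V', v ∈ D u then (1 : ZMod 2) else 0)
        = (if W.Nonempty then (1 : ZMod 2) else 0) *
          (if ∀ v ∈ S \ K, ∃ u ∈ V', v ∈ D u then (1 : ZMod 2) else 0) := by
    intro W hW V' hV'
    rw [if_congr (hiff W hW V' hV') rfl rfl]
    by_cases hA : W.Nonempty <;> by_cases hB : (∀ v ∈ S \ K, ∃ u ∈ V', v ∈ D u) <;>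
      simp [hA, hB]
  rw [Finset.sum_congr rfl fun W hW =>
    Finset.sum_congr rfl fun V' hV' => hterm W hW V' hV']
  have hfac : (∑ W ∈ K.powerset, ∑ V' ∈ (S \ K).powerset,
      (if W.Nonempty then (1 : ZMod 2) else 0) *
        (if ∀ v ∈ S \ K, ∃ u ∈ V', v ∈ D u then (1 : ZMod 2) else 0))
      = (∑ W ∈ K.powerset, (if W.Nonempty then (1 : ZMod 2) else 0)) *
        (∑ V' ∈ (S \ K).powerset,
          (if ∀ v ∈ S \ K, ∃ u ∈ V', v ∈ D u then (1 : ZMod 2) else 0)) :=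
    (Finset.sum_mul_sum _ _ _ _).symm
  rw [hfac]
  have hW1 : (∑ W ∈ K.powerset, (if W.Nonempty then (1 : ZMod 2) else 0)) = 1 := by
    have hptw : ∀ W ∈ K.powerset, (if W.Nonempty then (1 : ZMod 2) else 0)
        = 1 - (if W = ∅ then (1 : ZMod 2) else 0) := by
      intro W _
      rcases W.eq_empty_or_nonempty with rfl | h
      · simp
      · simp [h, Finset.nonempty_iff_ne_empty.1 h]
    rw [Finset.sum_congr rfl hptw, Finset.sum_sub_distrib]
    have h01 : (∑ W ∈ K.powerset, (if W = ∅ then (1 : ZMod 2) else 0)) = 1 := by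
      rw [Finset.sum_ite_eq' K.powerset (∅ : Finset α) (fun _ => (1 : ZMod 2))]
      simp [empty_mem_powerset]
    have hcard : (∑ _W ∈ K.powerset, (1 : ZMod 2)) = 0 := by
      rw [Finset.sum_const, card_powerset, nsmul_eq_mul, mul_one]
      have hKpos : K.card ≠ 0 := by
        have := card_pos.2 ⟨v₀, hv₀K⟩
        omega
      have h2 : ((2 : ℕ) : ZMod 2) = 0 := by decide
      rw [Nat.cast_pow, h2, zero_pow hKpos]
    rw [hcard, h01]
    decide
  rw [hW1, one_mul]
  exact ih (S \ K) hssub (fun u hu => h1 u (mem_sdiff.1 hu).1)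
    (fun u hu v hv hD => h3 u (mem_sdiff.1 hu).1 v (mem_sdiff.1 hv).1 hD)

lemma cnt (G S A : Finset α) (D : α → Finset α)
    (hS : S.Nonempty) (hSG : S ⊆ G) (hA : A ⊆ G) (hDG : ∀ u ∈ S, D u ⊆ G)
    (h1 : ∀ u ∈ S, u ∈ D u)
    (h2 : ∀ u ∈ S, u ∈ A → D u ⊆ A)
    (h3 : ∀ u ∈ S, ∀ v ∈ S, v ∈ D u → u = v ∨ D u = D v) :
    (if (S ∩ A).Nonempty ∧ A ∪ S.sup D = G then (1 : ZMod 2) else 0)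
      = ∑ V ∈ S.powerset.erase S, (if A ∪ V.sup D = G then (1 : ZMod 2) else 0) := by
  have hmemS : S ∈ S.powerset := mem_powerset_self S
  have htot := Finset.sum_erase_add S.powerset
    (fun V => (if A ∪ V.sup D = G then (1 : ZMod 2) else 0)) hmemS
  beta_reduce at htot
  have haa : ∀ x y : ZMod 2, x + y = 0 → x = y := by decide
  by_cases hSA : (S ∩ A).Nonempty
  · obtain ⟨u₀, hu₀'⟩ := hSA
    rw [mem_inter] at hu₀'
    have hDu₀ : D u₀ ⊆ A := h2 u₀ hu₀'.1 hu₀'.2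
    have hcovins : ∀ V : Finset α, A ∪ (insert u₀ V).sup D = A ∪ V.sup D := by
      intro V
      rw [sup_insert]
      ext x
      simp only [mem_union, sup_eq_union]
      constructor
      · rintro (h | h | h)
        · exact Or.inl h
        · exact Or.inl (hDu₀ h)
        · exact Or.inr h
      · rintro (h | h)
        · exact Or.inl h
        · exact Or.inr (Or.inr h)
    have hzero : (∑ V ∈ S.powerset, (if A ∪ V.sup D = G then (1 : ZMod 2) else 0)) = 0 := by
      refine Finset.sum_involution
        (fun V _ => if u₀ ∈ V then V.erase u₀ else insert u₀ V) ?_ ?_ ?_ ?_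
      · intro V hV
        beta_reduce
        have hsame : (if A ∪ (if u₀ ∈ V then V.erase u₀ else insert u₀ V).sup D = G
            then (1 : ZMod 2) else 0) = (if A ∪ V.sup D = G then (1 : ZMod 2) else 0) := by
          by_cases hu : u₀ ∈ V
          · rw [if_pos hu]
            have he : A ∪ V.sup D = A ∪ (V.erase u₀).sup D := by
              conv_lhs => rw [← insert_erase hu]
              rw [hcovins]
            rw [he]
          · rw [if_neg hu, hcovins]
        rw [hsame]
        have hxx : ∀ x : ZMod 2, x + x = 0 := by decide
        exact hxx _
      · intro V hV hne0
        beta_reduce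
        by_cases hu : u₀ ∈ V
        · rw [if_pos hu]
          intro hcontra
          exact (Finset.erase_eq_self.1 hcontra) hu
        · rw [if_neg hu]
          intro hcontra
          exact hu (Finset.insert_eq_self.1 hcontra)
      · intro V hV
        beta_reduce
        rw [mem_powerset] at hV
        by_cases hu : u₀ ∈ V
        · rw [if_pos hu]
          exact mem_powerset.2 ((erase_subset _ _).trans hV)
        · rw [if_neg hu]
          exact mem_powerset.2 (insert_subset hu₀'.1 hV)
      · intro V hV
        beta_reduce
        by_cases hu : u₀ ∈ V
        · rw [if_pos hu, if_neg (notMem_erase u₀ V)]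
          exact insert_erase hu
        · rw [if_neg hu, if_pos (mem_insert_self u₀ V)]
          exact erase_insert hu
    rw [hzero] at htot
    have hres := haa _ _ htot
    rw [if_congr (and_iff_right ⟨u₀, mem_inter.2 hu₀'⟩) rfl rfl]
    exact hres.symm
  · have hLHS : (if ((S ∩ A).Nonempty ∧ A ∪ S.sup D = G) then (1 : ZMod 2) else 0) = 0 := by
      simp [hSA]
    rw [hLHS]
    have hSA' : S ∩ A = ∅ := not_nonempty_iff_eq_empty.1 hSA
    by_cases hcov : A ∪ S.sup D = G
    · have hVsub : ∀ V ∈ S.powerset,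
          ((A ∪ V.sup D = G) ↔ (∀ v ∈ S, ∃ u ∈ V, v ∈ D u)) := by
        intro V hV
        rw [mem_powerset] at hV
        constructor
        · intro h v hv
          have hvG : v ∈ G := hSG hv
          rw [← h] at hvG
          rcases mem_union.1 hvG with hA2 | hsup
          · exfalso
            have : v ∈ S ∩ A := mem_inter.2 ⟨hv, hA2⟩
            rw [hSA'] at this
            exact notMem_empty v this
          · exact Finset.mem_sup.1 hsup
        · intro hhit
          apply subset_antisymm
          · exact union_subset hA (Finset.sup_le fun u hu => hDG u (hV hu))
          · rw [← hcov]
            refine union_subset subset_union_left (Finset.sup_le fun v hv => ?_)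
            obtain ⟨u, hu, hvD⟩ := hhit v hv
            rcases h3 u (hV hu) v hv hvD with rfl | e
            · exact le_trans (Finset.le_sup (f := D) hu) subset_union_right
            · rw [← e]
              exact le_trans (Finset.le_sup (f := D) hu) subset_union_right
      have hsum1 : (∑ V ∈ S.powerset, (if A ∪ V.sup D = G then (1 : ZMod 2) else 0)) = 1 := by
        rw [Finset.sum_congr rfl fun V hV => if_congr (hVsub V hV) rfl rfl]
        exact odd_hit D S h1 h3
      rw [hsum1] at htot
      have hfS : (if A ∪ S.sup D = G then (1 : ZMod 2) else 0) = 1 := if_pos hcov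
      rw [hfS] at htot
      have h2' : (∑ V ∈ S.powerset.erase S,
          (if A ∪ V.sup D = G then (1 : ZMod 2) else 0)) + 1 = 0 + 1 :=
        htot.trans (zero_add 1).symm
      exact (add_right_cancel h2').symm
    · symm
      apply Finset.sum_eq_zero
      intro V hV
      rw [if_neg]
      intro h
      apply hcov
      have hVS : V ⊆ S := mem_powerset.1 (mem_of_mem_erase hV)
      apply subset_antisymm (union_subset hA (Finset.sup_le fun u hu => hDG u hu))
      rw [← h]
      exact union_subset subset_union_left
        (le_trans (Finset.sup_mono hVS) subset_union_right)

/-! ### Pattern basics -/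

lemma mem_lbs {z : α} {p : Finset (Finset α)} {x : α} {T : Finset α}
    (hT : T ∈ p) (hx : x ∈ T) (hxz : x ≠ z) : x ∈ lbs z p :=
  mem_erase.2 ⟨hxz, Finset.mem_sup.2 ⟨T, hT, hx⟩⟩

lemma subset_insert_lbs {z : α} {p : Finset (Finset α)} {T : Finset α} (hT : T ∈ p) :
    T ⊆ insert z (lbs z p) := by
  intro x hx
  by_cases hxz : x = z
  · subst hxz
    exact mem_insert_self _ _
  · exact mem_insert_of_mem (mem_lbs hT hx hxz)

lemma singleton_mem_of_complete {z : α} {p : Finset (Finset α)} (hc : Complete z p)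
    {u : α} (hu : u ∈ lbs z p) : ({u} : Finset α) ∈ p := by
  rw [hc] at hu
  exact (mem_filter.1 hu).2

lemma linkRel_symm (p q : Finset (Finset α)) : Symmetric (linkRel p q) := by
  rintro S T ⟨h | h, hne⟩
  · exact ⟨Or.inr ⟨h.2, h.1⟩, by rwa [inter_comm]⟩
  · exact ⟨Or.inl ⟨h.2, h.1⟩, by rwa [inter_comm]⟩

lemma conn_symm {p q : Finset (Finset α)} {S T : Finset α} (h : conn p q S T) :
    conn p q T S := by
  haveI : Std.Symm (linkRel p q) := ⟨fun _ _ h => linkRel_symm p q h⟩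
  exact symm_of (Relation.ReflTransGen (linkRel p q)) h

lemma conn_of_z {z : α} {U : Finset α} {p q : Finset (Finset α)}
    (hp : IsPattern z U p) (hq : IsPattern z U q)
    {T T' : Finset α} (hT : T ∈ p ∪ q) (hzT : z ∈ T) (hT' : T' ∈ p ∪ q) (hzT' : z ∈ T') :
    conn p q T T' := by
  obtain ⟨Zp, ⟨hZp, hzZp⟩, _⟩ := hp.2
  obtain ⟨Zq, ⟨hZq, hzZq⟩, _⟩ := hq.2
  have step : ∀ A B : Finset α, A ∈ p → B ∈ q → z ∈ A → z ∈ B → linkRel p q A B :=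
    fun A B h1 h2 h3 h4 => ⟨Or.inl ⟨h1, h2⟩, ⟨z, mem_inter.2 ⟨h3, h4⟩⟩⟩
  rcases mem_union.1 hT with h1 | h1 <;> rcases mem_union.1 hT' with h2 | h2
  · exact Relation.ReflTransGen.tail
      (Relation.ReflTransGen.single (step T Zq h1 hZq hzT hzZq))
      (linkRel_symm p q (step T' Zq h2 hZq hzT' hzZq))
  · exact Relation.ReflTransGen.single (step T T' h1 h2 hzT hzT')
  · exact Relation.ReflTransGen.single (linkRel_symm p q (step T' T h2 h1 hzT' hzT))
  · exact Relation.ReflTransGen.tail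
      (Relation.ReflTransGen.single (linkRel_symm p q (step Zp T hZp h1 hzZp hzT)))
      (step Zp T' hZp h2 hzZp hzT')

lemma consistent_iff_conn {z : α} {U : Finset α} {p q : Finset (Finset α)}
    (hp : IsPattern z U p) (hq : IsPattern z U q)
    {Zp : Finset α} (hZp : Zp ∈ p) (hzZp : z ∈ Zp) :
    consistent p q ↔ ∀ T ∈ p ∪ q, conn p q Zp T := by
  have hpj : pjoin p q = (p ∪ q).image
      (fun S => ((p ∪ q).filter fun T => conn p q S T).sup id) := rfl
  constructor
  · intro hcons T hT
    obtain ⟨c, hc⟩ := Finset.card_eq_one.1 hcons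
    have hmem : ∀ S ∈ p ∪ q, ((p ∪ q).filter fun T' => conn p q S T').sup id = c := by
      intro S hS
      have h1 : ((p ∪ q).filter fun T' => conn p q S T').sup id ∈ pjoin p q := by
        rw [hpj]
        exact mem_image_of_mem _ hS
      rw [hc, mem_singleton] at h1
      exact h1
    have hzc : z ∈ c := by
      rw [← hmem Zp (mem_union_left _ hZp)]
      exact Finset.mem_sup.2 ⟨Zp, mem_filter.2 ⟨mem_union_left _ hZp, .refl⟩, hzZp⟩
    have hzT : z ∈ ((p ∪ q).filter fun T' => conn p q T T').sup id := by
      rw [hmem T hT]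
      exact hzc
    obtain ⟨T', hT', hzT'⟩ := Finset.mem_sup.1 hzT
    obtain ⟨hT'm, hconn⟩ := mem_filter.1 hT'
    exact conn_symm (hconn.trans (conn_of_z hp hq hT'm hzT' (mem_union_left _ hZp) hzZp))
  · intro h
    have hconn_all : ∀ S ∈ p ∪ q, ((p ∪ q).filter fun T' => conn p q S T') = p ∪ q := by
      intro S hS
      apply filter_true_of_mem
      intro T' hT'
      exact (conn_symm (h S hS)).trans (h T' hT')
    rw [consistent, Finset.card_eq_one]
    refine ⟨(p ∪ q).sup id, ?_⟩
    rw [hpj]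
    ext c
    simp only [mem_image, mem_singleton]
    constructor
    · rintro ⟨S, hS, rfl⟩
      rw [hconn_all S hS]
    · intro h'
      exact ⟨Zp, mem_union_left _ hZp, by rw [hconn_all Zp (mem_union_left _ hZp), h']⟩

lemma not_consistent_of_empty_mem {z : α} {U : Finset α} {p q : Finset (Finset α)}
    (hp : IsPattern z U p) (hq : IsPattern z U q)
    (h : (∅ : Finset α) ∈ p ∪ q) : ¬ consistent p q := by
  obtain ⟨Zp, ⟨hZp, hzZp⟩, _⟩ := hp.2
  intro hc
  have hconn := (consistent_iff_conn hp hq hZp hzZp).1 hc ∅ h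
  rcases Relation.ReflTransGen.cases_tail hconn with h1 | ⟨c, _, hrel⟩
  · exact notMem_empty z (h1 ▸ hzZp)
  · obtain ⟨x, hx⟩ := hrel.2
    rw [inter_empty] at hx
    exact notMem_empty x hx

lemma not_consistent_of_lbs_ne {z : α} {U : Finset α} {p q : Finset (Finset α)}
    (hp : IsPattern z U p) (hq : IsPattern z U q)
    (hpc : Complete z p) (hqc : Complete z q) (hne : lbs z p ≠ lbs z q) :
    ¬ consistent p q := by
  intro hc
  obtain ⟨Zp, ⟨hZp, hzZp⟩, _⟩ := hp.2
  have hall := (consistent_iff_conn hp hq hZp hzZp).1 hc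
  obtain ⟨u, hu⟩ := Finset.symmDiff_nonempty.2 hne
  rcases Finset.mem_symmDiff.1 hu with ⟨hup, huq⟩ | ⟨huq, hup⟩
  · -- u ∈ lbs p, u ∉ lbs q
    have huz : u ≠ z := (mem_erase.1 hup).1
    have hsp : ({u} : Finset α) ∈ p := singleton_mem_of_complete hpc hup
    have hconn := hall {u} (mem_union_left _ hsp)
    rcases Relation.ReflTransGen.cases_tail hconn with h1 | ⟨c, _, hrel⟩
    · have : z ∈ ({u} : Finset α) := h1 ▸ hzZp
      rw [mem_singleton] at this
      exact huz this.symm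
    · obtain ⟨hor, x, hx⟩ := hrel
      rw [mem_inter, mem_singleton] at hx
      obtain ⟨hxc, rfl⟩ := hx
      rcases hor with ⟨hcp, hq2⟩ | ⟨hcq, hp2⟩
      · exact huq (mem_lbs hq2 (mem_singleton_self x) huz)
      · exact huq (mem_lbs hcq hxc huz)
  · -- u ∈ lbs q, u ∉ lbs p
    have huz : u ≠ z := (mem_erase.1 huq).1
    have hsq : ({u} : Finset α) ∈ q := singleton_mem_of_complete hqc huq
    have hconn := hall {u} (mem_union_right _ hsq)
    rcases Relation.ReflTransGen.cases_tail hconn with h1 | ⟨c, _, hrel⟩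
    · have : z ∈ ({u} : Finset α) := h1 ▸ hzZp
      rw [mem_singleton] at this
      exact huz this.symm
    · obtain ⟨hor, x, hx⟩ := hrel
      rw [mem_inter, mem_singleton] at hx
      obtain ⟨hxc, rfl⟩ := hx
      rcases hor with ⟨hcp, hq2⟩ | ⟨hcq, hp2⟩
      · exact hup (mem_lbs hcp hxc huz)
      · exact hup (mem_lbs hp2 (mem_singleton_self x) huz)

lemma conn_of_inter {z : α} {U : Finset α} {p q : Finset (Finset α)}
    (hp : IsPattern z U p) (hq : IsPattern z U q)
    (hpc : Complete z p) (hqc : Complete z q) (hlbs : lbs z p = lbs z q)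
    {T T' : Finset α} (hT : T ∈ p ∪ q) (hT' : T' ∈ p ∪ q) (hne : (T ∩ T').Nonempty) :
    conn p q T T' := by
  obtain ⟨x, hx⟩ := hne
  rw [mem_inter] at hx
  by_cases hxz : x = z
  · subst hxz
    exact conn_of_z hp hq hT hx.1 hT' hx.2
  · have hxl : x ∈ lbs z p := by
      rcases mem_union.1 hT with h | h
      · exact mem_lbs h hx.1 hxz
      · rw [hlbs]
        exact mem_lbs h hx.1 hxz
    have hxp : ({x} : Finset α) ∈ p := singleton_mem_of_complete hpc hxl
    have hxq : ({x} : Finset α) ∈ q := singleton_mem_of_complete hqc (hlbs ▸ hxl)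
    have s1 : linkRel p q T {x} := by
      rcases mem_union.1 hT with h | h
      · exact ⟨Or.inl ⟨h, hxq⟩, ⟨x, mem_inter.2 ⟨hx.1, mem_singleton_self x⟩⟩⟩
      · exact ⟨Or.inr ⟨h, hxp⟩, ⟨x, mem_inter.2 ⟨hx.1, mem_singleton_self x⟩⟩⟩
    have s2 : linkRel p q {x} T' := by
      rcases mem_union.1 hT' with h | h
      · exact ⟨Or.inr ⟨hxq, h⟩, ⟨x, mem_inter.2 ⟨mem_singleton_self x, hx.2⟩⟩⟩
      · exact ⟨Or.inl ⟨hxp, h⟩, ⟨x, mem_inter.2 ⟨mem_singleton_self x, hx.2⟩⟩⟩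
    exact (Relation.ReflTransGen.single s1).tail s2

lemma iconn_conn {z : α} {U : Finset α} {p q : Finset (Finset α)}
    (hp : IsPattern z U p) (hq : IsPattern z U q)
    (hpc : Complete z p) (hqc : Complete z q) (hlbs : lbs z p = lbs z q)
    {T T' : Finset α} (h : iconn (p ∪ q) T T') : conn p q T T' := by
  induction h with
  | refl => exact .refl
  | tail hbc hrel ih =>
      exact ih.trans (conn_of_inter hp hq hpc hqc hlbs hrel.1 hrel.2.1 hrel.2.2)

lemma conn_subset_cl {p q : Finset (Finset α)} {Zp T : Finset α}
    (h : conn p q Zp T) : T ⊆ cl (p ∪ q) Zp := by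
  induction h with
  | refl => exact subset_cl _ _
  | tail hzb hrel ih =>
      obtain ⟨hor, hne⟩ := hrel
      obtain ⟨x, hx⟩ := hne
      rw [mem_inter] at hx
      refine subset_cl_of_tch
        (mem_tch_of_inter ?_ ⟨x, mem_inter.2 ⟨hx.2, ih hx.1⟩⟩)
      rcases hor with ⟨_, h1⟩ | ⟨_, h1⟩
      · exact mem_union_right _ h1
      · exact mem_union_left _ h1

lemma consistent_iff_cl {z : α} {U : Finset α} {p q : Finset (Finset α)}
    (hp : IsPattern z U p) (hq : IsPattern z U q)
    (hpc : Complete z p) (hqc : Complete z q) (hlbs : lbs z p = lbs z q)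
    (hne : ∀ T ∈ p ∪ q, T.Nonempty)
    {Zp : Finset α} (hZp : Zp ∈ p) (hzZp : z ∈ Zp) :
    consistent p q ↔ cl (p ∪ q) Zp = insert z (lbs z p) := by
  rw [consistent_iff_conn hp hq hZp hzZp]
  constructor
  · intro hall
    apply subset_antisymm
    · apply cl_subset (subset_insert_lbs hZp)
      intro T hT
      rcases mem_union.1 hT with h | h
      · exact subset_insert_lbs h
      · rw [hlbs]
        exact subset_insert_lbs h
    · intro x hx
      rcases mem_insert.1 hx with rfl | hxl
      · exact subset_cl _ _ hzZp
      · have hxs : ({x} : Finset α) ∈ p := singleton_mem_of_complete hpc hxl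
        exact conn_subset_cl (hall {x} (mem_union_left _ hxs)) (mem_singleton_self x)
  · intro hcl T hT
    have hTsub : T ⊆ cl (p ∪ q) Zp := by
      rw [hcl]
      rcases mem_union.1 hT with h | h
      · exact subset_insert_lbs h
      · rw [hlbs]
        exact subset_insert_lbs h
    obtain ⟨x, hx⟩ := hne T hT
    have hTt : T ∈ tch (p ∪ q) Zp :=
      mem_tch_of_inter hT ⟨x, mem_inter.2 ⟨hx, hTsub hx⟩⟩
    obtain ⟨hTm, T₀, hT₀, hne0, hc⟩ := mem_tch.1 hTt
    have c1 : conn p q Zp T₀ :=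
      conn_of_inter hp hq hpc hqc hlbs (mem_union_left _ hZp) hT₀
        (by rwa [inter_comm] at hne0)
    exact c1.trans (iconn_conn hp hq hpc hqc hlbs hc)

/-! ### The canonical complete patterns `pat` -/

/-- The complete pattern with zero-set `{z} ∪ X`, singletons from `B`, and extra blocks `E`. -/
def pat (z : α) (B X : Finset α) (E : Finset (Finset α)) : Finset (Finset α) :=
  insert (insert z X) ((B.image fun u => ({u} : Finset α)) ∪ E)

lemma pat_isPattern {z : α} {U B X : Finset α} {E : Finset (Finset α)}
    (hz : z ∉ U) (hB : B ⊆ U) (hX : X ⊆ B) (hE : ∀ T ∈ E, T ⊆ B) :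
    IsPattern z U (pat z B X E) := by
  constructor
  · intro T hT
    rcases mem_insert.1 hT with rfl | hT
    · exact insert_subset_insert _ (hX.trans hB)
    · rcases mem_union.1 hT with h | h
      · obtain ⟨u, hu, rfl⟩ := mem_image.1 h
        intro x hx
        rw [mem_singleton] at hx
        subst hx
        exact mem_insert_of_mem (hB hu)
      · exact ((hE T h).trans hB).trans (subset_insert _ _)
  · refine ⟨insert z X, ⟨mem_insert_self _ _, mem_insert_self _ _⟩, ?_⟩
    rintro T ⟨hT, hzT⟩
    rcases mem_insert.1 hT with rfl | hT
    · rfl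
    · exfalso
      rcases mem_union.1 hT with h | h
      · obtain ⟨u, hu, rfl⟩ := mem_image.1 h
        rw [mem_singleton] at hzT
        subst hzT
        exact hz (hB hu)
      · exact hz (hB (hE T h hzT))

lemma pat_lbs {z : α} {B X : Finset α} {E : Finset (Finset α)}
    (hzB : z ∉ B) (hX : X ⊆ B) (hE : ∀ T ∈ E, T ⊆ B) :
    lbs z (pat z B X E) = B := by
  ext x
  simp only [lbs, mem_erase, Finset.mem_sup, id_eq]
  constructor
  · rintro ⟨hxz, T, hT, hxT⟩
    rcases mem_insert.1 hT with rfl | hT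
    · rcases mem_insert.1 hxT with rfl | h
      · exact absurd rfl hxz
      · exact hX h
    · rcases mem_union.1 hT with h | h
      · obtain ⟨u, hu, rfl⟩ := mem_image.1 h
        rw [mem_singleton] at hxT
        subst hxT
        exact hu
      · exact hE T h hxT
  · intro hx
    refine ⟨fun h => hzB (h ▸ hx), {x}, ?_, mem_singleton_self x⟩
    exact mem_insert_of_mem (mem_union_left _ (mem_image_of_mem _ hx))

lemma pat_complete {z : α} {B X : Finset α} {E : Finset (Finset α)}
    (hzB : z ∉ B) (hX : X ⊆ B) (hE : ∀ T ∈ E, T ⊆ B) :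
    Complete z (pat z B X E) := by
  unfold Complete sing
  rw [pat_lbs hzB hX hE]
  symm
  apply filter_true_of_mem
  intro u hu
  exact mem_insert_of_mem (mem_union_left _ (mem_image_of_mem _ hu))

lemma pat_nonempty {z : α} {B X : Finset α} {E : Finset (Finset α)}
    (hEne : ∀ T ∈ E, T.Nonempty) : ∀ T ∈ pat z B X E, T.Nonempty := by
  intro T hT
  rcases mem_insert.1 hT with rfl | hT
  · exact ⟨z, mem_insert_self _ _⟩
  · rcases mem_union.1 hT with h | h
    · obtain ⟨u, _, rfl⟩ := mem_image.1 h
      exact ⟨u, mem_singleton_self u⟩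
    · exact hEne T h

/-! ### The key parity identity -/

lemma step_identity {z : α} {U : Finset α} (hz : z ∉ U) {B : Finset α} (hB : B ⊆ U)
    {X : Finset α} (hX : X ⊆ B) {E : Finset (Finset α)} (hE : ∀ T ∈ E, T ⊆ B)
    (hEne : ∀ T ∈ E, T.Nonempty) {S : Finset α} (hSB : S ⊆ B) (hSne : S.Nonempty)
    (q : Finset (Finset α)) (hq : IsPattern z U q) (hqc : Complete z q) :
    (if consistent (pat z B X (insert S E)) q then (1 : ZMod 2) else 0)
      = ∑ V ∈ S.powerset.erase S,
          (if consistent (pat z B (X ∪ V) E) q then (1 : ZMod 2) else 0) := by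
  have hzB : z ∉ B := fun h => hz (hB h)
  have hE' : ∀ T ∈ insert S E, T ⊆ B := by
    intro T hT
    rcases mem_insert.1 hT with rfl | h
    · exact hSB
    · exact hE T h
  have hEne' : ∀ T ∈ insert S E, T.Nonempty := by
    intro T hT
    rcases mem_insert.1 hT with rfl | h
    · exact hSne
    · exact hEne T h
  have hpP : IsPattern z U (pat z B X (insert S E)) := pat_isPattern hz hB hX hE'
  have hpC : Complete z (pat z B X (insert S E)) := pat_complete hzB hX hE'
  have hplbs : lbs z (pat z B X (insert S E)) = B := pat_lbs hzB hX hE'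
  have hXV : ∀ V ∈ S.powerset.erase S, X ∪ V ⊆ B := fun V hV =>
    union_subset hX ((mem_powerset.1 (mem_of_mem_erase hV)).trans hSB)
  by_cases hqlbs : lbs z q = B
  case neg =>
    rw [if_neg (not_consistent_of_lbs_ne hpP hq hpC hqc
      (by rw [hplbs]; exact fun h => hqlbs h.symm))]
    symm
    apply Finset.sum_eq_zero
    intro V hV
    rw [if_neg (not_consistent_of_lbs_ne (pat_isPattern hz hB (hXV V hV) hE) hq
      (pat_complete hzB (hXV V hV) hE) hqc
      (by rw [pat_lbs hzB (hXV V hV) hE]; exact fun h => hqlbs h.symm))]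
  case pos =>
  by_cases hq0 : (∅ : Finset α) ∈ q
  case pos =>
    rw [if_neg (not_consistent_of_empty_mem hpP hq (mem_union_right _ hq0))]
    symm
    apply Finset.sum_eq_zero
    intro V hV
    rw [if_neg (not_consistent_of_empty_mem (pat_isPattern hz hB (hXV V hV) hE) hq
      (mem_union_right _ hq0))]
  case neg =>
  have hqne : ∀ T ∈ q, T.Nonempty := by
    intro T hT
    rw [Finset.nonempty_iff_ne_empty]
    rintro rfl
    exact hq0 hT
  -- The common family of blocks
  have hMsub : ∀ T ∈ (B.image fun u => ({u} : Finset α)) ∪ E ∪ q, T ⊆ insert z B := by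
    intro T hT
    rcases mem_union.1 hT with h | h
    · rcases mem_union.1 h with h1 | h1
      · obtain ⟨u, hu, rfl⟩ := mem_image.1 h1
        intro x hx
        rw [mem_singleton] at hx
        subst hx
        exact mem_insert_of_mem hu
      · exact (hE T h1).trans (subset_insert _ _)
    · have := subset_insert_lbs (z := z) h
      rwa [hqlbs] at this
  set M : Finset (Finset α) := (B.image fun u => ({u} : Finset α)) ∪ E ∪ q with hM
  have hZ₀G : (insert z X : Finset α) ⊆ insert z B := insert_subset_insert _ hX
  -- characterization for patterns without S
  have hchar : ∀ V, V ⊆ S →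
      (consistent (pat z B (X ∪ V) E) q ↔
        cl M (insert z X) ∪ V.sup (fun u => cl M {u}) = insert z B) := by
    intro V hVS
    have hXVB : X ∪ V ⊆ B := union_subset hX (hVS.trans hSB)
    have hP := pat_isPattern hz hB hXVB hE
    have hC := pat_complete hzB hXVB hE
    have hlbsV : lbs z (pat z B (X ∪ V) E) = B := pat_lbs hzB hXVB hE
    have hallne : ∀ T ∈ pat z B (X ∪ V) E ∪ q, T.Nonempty := by
      intro T hT
      rcases mem_union.1 hT with h | h
      · exact pat_nonempty hEne T h
      · exact hqne T h
    have hbridge := consistent_iff_cl hP hq hC hqc (by rw [hlbsV, hqlbs])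
      hallne (mem_insert_self _ _) (mem_insert_self z _)
    rw [hbridge, hlbsV]
    have hpq : pat z B (X ∪ V) E ∪ q = insert (insert z (X ∪ V)) M := by
      rw [pat, insert_union]
    have hZV : (insert z (X ∪ V) : Finset α) = insert z X ∪ V := by
      rw [insert_union]
    have hmeet : ((insert z X ∪ V) ∩ cl M (insert z X ∪ V)).Nonempty := by
      refine ⟨z, mem_inter.2 ⟨?_, subset_cl _ _ ?_⟩⟩ <;>
        exact mem_union_left _ (mem_insert_self z X)
    rw [hpq, hZV, cl_insert_meet hmeet, union_self, cl_union_sup]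
  -- characterization for the pattern with S
  have hcharS : consistent (pat z B X (insert S E)) q ↔
      ((S ∩ cl M (insert z X)).Nonempty ∧
        cl M (insert z X) ∪ S.sup (fun u => cl M {u}) = insert z B) := by
    have hallne : ∀ T ∈ pat z B X (insert S E) ∪ q, T.Nonempty := by
      intro T hT
      rcases mem_union.1 hT with h | h
      · exact pat_nonempty hEne' T h
      · exact hqne T h
    have hbridge := consistent_iff_cl hpP hq hpC hqc (by rw [hplbs, hqlbs])
      hallne (mem_insert_self _ _) (mem_insert_self z _)
    rw [hbridge, hplbs]
    have hpq : pat z B X (insert S E) ∪ q = insert (insert z X) (insert S M) := by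
      rw [pat, union_insert, insert_union, insert_union]
    have hmeet : ((insert z X : Finset α) ∩ cl (insert S M) (insert z X)).Nonempty :=
      ⟨z, mem_inter.2 ⟨mem_insert_self z X, subset_cl _ _ (mem_insert_self z X)⟩⟩
    rw [hpq, cl_insert_meet hmeet, union_self]
    by_cases hSA : (S ∩ cl M (insert z X)).Nonempty
    · rw [cl_insert_meet hSA, cl_union_sup]
      simp only [hSA, true_and]
    · rw [cl_insert_disj (not_nonempty_iff_eq_empty.1 hSA)]
      constructor
      · intro h
        exfalso
        obtain ⟨s, hs⟩ := hSne
        have hsA : s ∈ cl M (insert z X) := by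
          rw [h]
          exact mem_insert_of_mem (hSB hs)
        exact hSA ⟨s, mem_inter.2 ⟨hs, hsA⟩⟩
      · rintro ⟨h, _⟩
        exact absurd h hSA
  rw [if_congr hcharS rfl rfl,
    Finset.sum_congr rfl fun V hV =>
      if_congr (hchar V (mem_powerset.1 (mem_of_mem_erase hV))) rfl rfl]
  exact cnt (insert z B) S (cl M (insert z X)) (fun u => cl M {u}) hSne
    (fun u hu => mem_insert_of_mem (hSB hu))
    (cl_subset hZ₀G hMsub)
    (fun u hu => cl_subset (by
      intro x hx
      rw [mem_singleton] at hx
      subst hx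
      exact mem_insert_of_mem (hSB hu)) hMsub)
    (fun u _ => subset_cl _ _ (mem_singleton_self u))
    (fun u _ hu => cl_subset_cl (by
      intro x hx
      rw [mem_singleton] at hx
      subst hx
      exact hu))
    (by
      intro u _ v _ hv
      by_cases huv : u = v
      · exact Or.inl huv
      · refine Or.inr (subset_antisymm ?_ ?_)
        · apply cl_subset_cl
          intro x hx
          rw [mem_singleton] at hx
          subst hx
          exact cl_singleton_comm hv (fun h => huv h.symm)
        · apply cl_subset_cl
          intro x hx
          rw [mem_singleton] at hx
          subst hx
          exact hv)

/-! ### Assembling parity representations -/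

lemma card_filter_symmDiff (P : Finset (Finset α) → Prop)
    (Aa Bb : Finset (Finset (Finset α))) :
    (((Aa ∆ Bb).filter P).card : ZMod 2)
      = ((Aa.filter P).card : ZMod 2) + ((Bb.filter P).card : ZMod 2) := by
  have h1 : (Aa ∆ Bb).filter P = (Aa.filter P) ∆ (Bb.filter P) := by
    ext c
    simp only [Finset.mem_symmDiff, mem_filter]
    tauto
  rw [h1]
  have h2 : (Aa.filter P) ∆ (Bb.filter P)
      = ((Aa.filter P) ∪ (Bb.filter P)) \ ((Aa.filter P) ∩ (Bb.filter P)) := by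
    rw [symmDiff_eq_sup_sdiff_inf]
    rfl
  rw [h2, card_sdiff_of_subset (inter_subset_union)]
  have hle : ((Aa.filter P) ∩ (Bb.filter P)).card ≤ ((Aa.filter P) ∪ (Bb.filter P)).card :=
    card_le_card inter_subset_union
  rw [Nat.cast_sub hle]
  have hc : (((Aa.filter P) ∪ (Bb.filter P)).card : ZMod 2)
      + (((Aa.filter P) ∩ (Bb.filter P)).card : ZMod 2)
      = ((Aa.filter P).card : ZMod 2) + ((Bb.filter P).card : ZMod 2) := by
    exact_mod_cast congrArg (Nat.cast : ℕ → ZMod 2)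
      (Finset.card_union_add_card_inter (Aa.filter P) (Bb.filter P))
  have hsub : ∀ x y : ZMod 2, x - y = x + y := by decide
  rw [hsub]
  exact hc

lemma xor_sum {ι : Type*} (𝒱 : Finset ι) (g : ι → Finset (Finset (Finset α))) :
    ∃ C : Finset (Finset (Finset α)), (∀ c ∈ C, ∃ i ∈ 𝒱, c ∈ g i) ∧
      ∀ P : Finset (Finset α) → Prop,
        ((C.filter P).card : ZMod 2) = ∑ i ∈ 𝒱, (((g i).filter P).card : ZMod 2) := by
  classical
  induction 𝒱 using Finset.induction_on with
  | empty => exact ⟨∅, by simp, by simp⟩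
  | @insert i 𝒱 hi ih =>
    obtain ⟨C, hC1, hC2⟩ := ih
    refine ⟨g i ∆ C, ?_, ?_⟩
    · intro c hc
      rcases Finset.mem_symmDiff.1 hc with ⟨h, _⟩ | ⟨h, _⟩
      · exact ⟨i, mem_insert_self _ _, h⟩
      · obtain ⟨j, hj, hcj⟩ := hC1 c h
        exact ⟨j, mem_insert_of_mem hj, hcj⟩
    · intro P
      rw [card_filter_symmDiff, hC2 P, Finset.sum_insert hi]

lemma rep_one {z : α} {U : Finset α} (hz : z ∉ U) {B : Finset α} (hB : B ⊆ U) :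
    ∀ (n : ℕ) (E : Finset (Finset α)), E.card = n → (∀ T ∈ E, T ⊆ B ∧ T.Nonempty) →
      ∀ X, X ⊆ B →
      ∃ C : Finset (Finset (Finset α)),
        (∀ c ∈ C, ∃ X' Y : Finset α, X' ⊆ Y ∧ Y ⊆ U ∧ c = csPattern z X' Y) ∧
        ∀ q, IsPattern z U q → Complete z q →
          ((C.filter fun r => consistent r q).card : ZMod 2)
            = if consistent (pat z B X E) q then 1 else 0 := by
  intro n
  induction n with
  | zero =>
    intro E hE0 hE X hX
    obtain rfl : E = ∅ := card_eq_zero.1 hE0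
    refine ⟨{csPattern z X B}, ?_, ?_⟩
    · intro c hc
      rw [mem_singleton] at hc
      exact ⟨X, B, hX, hB, hc⟩
    · intro q hq hqc
      have hps : pat z B X ∅ = csPattern z X B := by
        rw [pat, union_empty, csPattern]
      rw [hps, filter_singleton]
      by_cases h : consistent (csPattern z X B) q <;> simp [h]
  | succ n ih =>
    intro E hEc hE X hX
    have hne : E.Nonempty := card_pos.1 (by omega)
    obtain ⟨S, hS⟩ := hne
    have hSB : S ⊆ B := (hE S hS).1
    have hSne : S.Nonempty := (hE S hS).2
    have hE'c : (E.erase S).card = n := by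
      rw [card_erase_of_mem hS, hEc]
      omega
    have hE'h : ∀ T ∈ E.erase S, T ⊆ B ∧ T.Nonempty := fun T hT =>
      hE T (mem_of_mem_erase hT)
    have hrec : ∀ V : {V // V ∈ S.powerset.erase S},
        ∃ C : Finset (Finset (Finset α)),
          (∀ c ∈ C, ∃ X' Y : Finset α, X' ⊆ Y ∧ Y ⊆ U ∧ c = csPattern z X' Y) ∧
          ∀ q, IsPattern z U q → Complete z q →
            ((C.filter fun r => consistent r q).card : ZMod 2)
              = if consistent (pat z B (X ∪ V.1) (E.erase S)) q then 1 else 0 := by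
      intro V
      exact ih (E.erase S) hE'c hE'h (X ∪ V.1)
        (union_subset hX ((mem_powerset.1 (mem_of_mem_erase V.2)).trans hSB))
    choose Cf hCf1 hCf2 using hrec
    obtain ⟨C, hC1, hC2⟩ := xor_sum (S.powerset.erase S).attach Cf
    refine ⟨C, ?_, ?_⟩
    · intro c hc
      obtain ⟨V, _, hcV⟩ := hC1 c hc
      exact hCf1 V c hcV
    · intro q hq hqc
      rw [hC2]
      calc (∑ V ∈ (S.powerset.erase S).attach,
              (((Cf V).filter fun r => consistent r q).card : ZMod 2))
          = ∑ V ∈ (S.powerset.erase S).attach,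
              (if consistent (pat z B (X ∪ V.1) (E.erase S)) q then (1 : ZMod 2) else 0) :=
            Finset.sum_congr rfl fun V _ => hCf2 V q hq hqc
        _ = ∑ V ∈ S.powerset.erase S,
              (if consistent (pat z B (X ∪ V) (E.erase S)) q then (1 : ZMod 2) else 0) :=
            Finset.sum_attach (S.powerset.erase S)
              (fun V => if consistent (pat z B (X ∪ V) (E.erase S)) q then (1 : ZMod 2) else 0)
        _ = if consistent (pat z B X E) q then 1 else 0 := by
            conv_rhs => rw [← insert_erase hS]
            exact (step_identity hz hB hX (fun T hT => (hE'h T hT).1)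
              (fun T hT => (hE'h T hT).2) hSB hSne q hq hqc).symm

/-- Every finite family of complete patterns is parity-represented by a family of
CS-patterns. -/
theorem csPatterns_parity_represent (z : α) (U : Finset α) (hz : z ∉ U)
    (D : Finset (Finset (Finset α)))
    (hD : ∀ p ∈ D, IsPattern z U p ∧ Complete z p) :
    ∃ C : Finset (Finset (Finset α)),
      (∀ c ∈ C, ∃ X Y : Finset α, X ⊆ Y ∧ Y ⊆ U ∧ c = csPattern z X Y) ∧
      ParityRep z U C D := by
  classical
  induction D using Finset.induction_on with
  | empty => exact ⟨∅, by simp, fun q hq hqc => rfl⟩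
  | @insert p D hpD ih =>
    obtain ⟨CD, hCD1, hCD2⟩ := ih fun r hr => hD r (mem_insert_of_mem hr)
    obtain ⟨hpP, hpC⟩ := hD p (mem_insert_self _ _)
    have hsingle : ∃ Cp : Finset (Finset (Finset α)),
        (∀ c ∈ Cp, ∃ X Y : Finset α, X ⊆ Y ∧ Y ⊆ U ∧ c = csPattern z X Y) ∧
        ∀ q, IsPattern z U q → Complete z q →
          ((Cp.filter fun r => consistent r q).card : ZMod 2)
            = if consistent p q then 1 else 0 := by
      by_cases h0 : (∅ : Finset α) ∈ p
      · refine ⟨∅, by simp, fun q hq hqc => ?_⟩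
        rw [if_neg (not_consistent_of_empty_mem hpP hq (mem_union_left _ h0))]
        simp
      · obtain ⟨Zp, ⟨hZp, hzZp⟩, huniq⟩ := hpP.2
        have hBU : lbs z p ⊆ U := by
          intro x hx
          obtain ⟨hxz, hxs⟩ := mem_erase.1 hx
          obtain ⟨T, hT, hxT⟩ := Finset.mem_sup.1 hxs
          rcases mem_insert.1 (hpP.1 T hT hxT) with h | h
          · exact absurd h hxz
          · exact h
        have hXB : Zp.erase z ⊆ lbs z p := by
          intro x hx
          obtain ⟨hxz, hxC⟩ := mem_erase.1 hx
          exact mem_lbs hZp hxC hxz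
        have hEfacts : ∀ T ∈ p.filter (fun T => z ∉ T), T ⊆ lbs z p ∧ T.Nonempty := by
          intro T hT
          obtain ⟨hTp, hzT⟩ := mem_filter.1 hT
          constructor
          · intro x hx
            exact mem_lbs hTp hx (fun h => hzT (h ▸ hx))
          · rw [Finset.nonempty_iff_ne_empty]
            rintro rfl
            exact h0 hTp
        have hZpX : insert z (Zp.erase z) = Zp := insert_erase hzZp
        have hpeq : p = pat z (lbs z p) (Zp.erase z) (p.filter (fun T => z ∉ T)) := by
          ext T
          constructor
          · intro hT
            by_cases hzT : z ∈ T
            · have hTZ : T = Zp := huniq T ⟨hT, hzT⟩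
              rw [hTZ]
              have hmm : insert z (Zp.erase z) ∈
                  pat z (lbs z p) (Zp.erase z) (p.filter (fun T => z ∉ T)) :=
                mem_insert_self _ _
              rwa [hZpX] at hmm
            · exact mem_insert_of_mem (mem_union_right _ (mem_filter.2 ⟨hT, hzT⟩))
          · intro hT
            rcases mem_insert.1 hT with rfl | hT2
            · rw [hZpX]
              exact hZp
            · rcases mem_union.1 hT2 with h | h
              · obtain ⟨u, hu, rfl⟩ := mem_image.1 h
                exact singleton_mem_of_complete hpC hu
              · exact (mem_filter.1 h).1
        obtain ⟨Cp, h1, h2⟩ := rep_one hz hBU (p.filter (fun T => z ∉ T)).card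
          (p.filter (fun T => z ∉ T)) rfl hEfacts (Zp.erase z) hXB
        refine ⟨Cp, h1, fun q hq hqc => ?_⟩
        rw [h2 q hq hqc, ← hpeq]
    obtain ⟨Cp, hCp1, hCp2⟩ := hsingle
    refine ⟨Cp ∆ CD, ?_, ?_⟩
    · intro c hc
      rcases Finset.mem_symmDiff.1 hc with ⟨h, _⟩ | ⟨h, _⟩
      · exact hCp1 c h
      · exact hCD1 c h
    · intro q hq hqc
      have hCD2' : ((CD.filter fun r => consistent r q).card : ZMod 2)
          = ((D.filter fun r => consistent r q).card : ZMod 2) :=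
        (ZMod.natCast_eq_natCast_iff _ _ 2).2 (hCD2 q hq hqc)
      have key : (((Cp ∆ CD).filter fun r => consistent r q).card : ZMod 2)
          = ((((insert p D).filter fun r => consistent r q)).card : ZMod 2) := by
        rw [card_filter_symmDiff, hCp2 q hq hqc, filter_insert]
        by_cases hcons : consistent p q
        · rw [if_pos hcons, if_pos hcons,
            card_insert_of_notMem (fun h => hpD (mem_of_mem_filter p h))]
          push_cast
          rw [hCD2']
          ring
        · rw [if_neg hcons, if_neg hcons, hCD2']
          ring
      exact (ZMod.natCast_eq_natCast_iff _ _ 2).1 key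

end PatternST
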